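/- Let G = SL₃(ℂ) and let K ⊆ G be the subgroup of all matrices of the form [[t₁,0,a],[0,t₂,b],[0,0,t₃]] with a,b ∈ ℂ and t₁t₂t₃ = 1. Then the normalizer N_G(K) equals K ∪ ρK, where ρ = [[0,1,0],[1,0,0],[0,0,−1]]. -/

import Mathlib

private abbrev M3 := Matrix (Fin 3) (Fin 3) ℂ
private abbrev SL3 := Matrix.SpecialLinearGroup (Fin 3) ℂ

private lemma row2_zero (n m : M3) (hdet : m.det = 1)
    (h1 : m 1 0 * n 2 0 = 0) (h2 : m 2 0 * n 2 0 = 0) (h3 : m 1 1 * n 2 0 = 0)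
    (h4 : m 2 1 * n 2 0 = 0) (h5 : m 0 0 * n 2 1 = 0) (h6 : m 2 0 * n 2 1 = 0)
    (h7 : m 0 1 * n 2 1 = 0) (h8 : m 2 1 * n 2 1 = 0) :
    n 2 0 = 0 ∧ n 2 1 = 0 := by
  rw [Matrix.det_fin_three] at hdet
  constructor
  · by_contra hx
    have e1 : m 1 0 = 0 := by rcases mul_eq_zero.mp h1 with h | h; exact h; exact absurd h hx
    have e2 : m 2 0 = 0 := by rcases mul_eq_zero.mp h2 with h | h; exact h; exact absurd h hx
    have e3 : m 1 1 = 0 := by rcases mul_eq_zero.mp h3 with h | h; exact h; exact absurd h hx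
    have e4 : m 2 1 = 0 := by rcases mul_eq_zero.mp h4 with h | h; exact h; exact absurd h hx
    simp [e1, e2, e3, e4] at hdet
  · by_contra hx
    have e1 : m 0 0 = 0 := by rcases mul_eq_zero.mp h5 with h | h; exact h; exact absurd h hx
    have e2 : m 2 0 = 0 := by rcases mul_eq_zero.mp h6 with h | h; exact h; exact absurd h hx
    have e3 : m 0 1 = 0 := by rcases mul_eq_zero.mp h7 with h | h; exact h; exact absurd h hx
    have e4 : m 2 1 = 0 := by rcases mul_eq_zero.mp h8 with h | h; exact h; exact absurd h hx
    simp [e1, e2, e3, e4] at hdet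

set_option maxHeartbeats 1000000 in
/-- For `G = SL₃(ℂ)` and the subgroup `K` of matrices `[[t₁,0,a],[0,t₂,b],[0,0,t₃]]` with
`t₁t₂t₃ = 1`, the normalizer of `K` equals `K ∪ ρK`, where `ρ = [[0,1,0],[1,0,0],[0,0,−1]]`. -/
theorem normalizer_of_K_eq_K_union_rhoK
    (K : Subgroup (Matrix.SpecialLinearGroup (Fin 3) ℂ))
    (hK : ∀ g : Matrix.SpecialLinearGroup (Fin 3) ℂ, g ∈ K ↔
      ∃ (t₁ t₂ t₃ a b : ℂ), t₁ * t₂ * t₃ = 1 ∧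
        (g : Matrix (Fin 3) (Fin 3) ℂ) = !![t₁, 0, a; 0, t₂, b; 0, 0, t₃])
    (ρ : Matrix.SpecialLinearGroup (Fin 3) ℂ)
    (hρ : (ρ : Matrix (Fin 3) (Fin 3) ℂ) = !![0, 1, 0; 1, 0, 0; 0, 0, -1]) :
    (Subgroup.normalizer (K : Set (Matrix.SpecialLinearGroup (Fin 3) ℂ)) : Set (Matrix.SpecialLinearGroup (Fin 3) ℂ)) =
      (K : Set (Matrix.SpecialLinearGroup (Fin 3) ℂ)) ∪
        (fun k => ρ * k) '' (K : Set (Matrix.SpecialLinearGroup (Fin 3) ℂ)) := by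
  have hρ2 : ρ * ρ = 1 := by
    apply Subtype.ext
    rw [Matrix.SpecialLinearGroup.coe_mul, hρ, Matrix.SpecialLinearGroup.coe_one,
      Matrix.one_fin_three]
    norm_num [Matrix.mul_fin_three]
  have hρinv : ρ⁻¹ = ρ := inv_eq_of_mul_eq_one_right hρ2
  -- ρ normalizes K
  have key : ∀ h : SL3, h ∈ K → ρ * h * ρ⁻¹ ∈ K := by
    intro h hh
    obtain ⟨t1, t2, t3, a, b, hp, hm⟩ := (hK h).mp hh
    refine (hK _).mpr ⟨t2, t1, t3, -b, -a, by linear_combination hp, ?_⟩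
    rw [hρinv, Matrix.SpecialLinearGroup.coe_mul, Matrix.SpecialLinearGroup.coe_mul, hρ, hm]
    norm_num [Matrix.mul_fin_three]
  have hρnorm : ρ ∈ Subgroup.normalizer (K : Set SL3) := by
    rw [Subgroup.mem_normalizer_iff]
    intro h
    constructor
    · exact key h
    · intro hh
      have h2 := key _ hh
      have e : ρ * (ρ * h * ρ⁻¹) * ρ⁻¹ = h := by
        rw [hρinv]
        calc ρ * (ρ * h * ρ) * ρ = (ρ * ρ) * h * (ρ * ρ) := by group
          _ = h := by rw [hρ2, one_mul, mul_one]
      rwa [e] at h2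
  ext g
  simp only [Set.mem_union, SetLike.mem_coe, Set.mem_image]
  constructor
  · -- forward direction
    intro hg
    obtain ⟨u1, hc1⟩ : ∃ u : SL3, (↑u : M3) = !![1,0,1;0,1,0;0,0,1] :=
      ⟨⟨_, by norm_num [Matrix.det_fin_three, Matrix.cons_val_two, Matrix.tail_cons, Matrix.head_cons]⟩, rfl⟩
    obtain ⟨u2, hc2⟩ : ∃ u : SL3, (↑u : M3) = !![1,0,0;0,1,1;0,0,1] :=
      ⟨⟨_, by norm_num [Matrix.det_fin_three, Matrix.cons_val_two, Matrix.tail_cons, Matrix.head_cons]⟩, rfl⟩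
    obtain ⟨dd, hcd⟩ : ∃ u : SL3, (↑u : M3) = !![2,0,0;0,2⁻¹,0;0,0,1] :=
      ⟨⟨_, by norm_num [Matrix.det_fin_three, Matrix.cons_val_two, Matrix.tail_cons, Matrix.head_cons]⟩, rfl⟩
    have hu1K : u1 ∈ K := (hK u1).mpr ⟨1, 1, 1, 1, 0, by norm_num, hc1⟩
    have hu2K : u2 ∈ K := (hK u2).mpr ⟨1, 1, 1, 0, 1, by norm_num, hc2⟩
    have hddK : dd ∈ K := (hK dd).mpr ⟨2, 2⁻¹, 1, 0, 0, by norm_num, hcd⟩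
    have hgK := Subgroup.mem_normalizer_iff.mp hg
    have hgK' := Subgroup.mem_normalizer_iff.mp ((Subgroup.normalizer (K : Set SL3)).inv_mem hg)
    set n : M3 := ↑g with hn
    set m : M3 := (↑(g⁻¹) : M3) with hm
    have hnm : n * m = 1 := by
      rw [hn, hm, ← Matrix.SpecialLinearGroup.coe_mul, mul_inv_cancel,
        Matrix.SpecialLinearGroup.coe_one]
    have hmn : m * n = 1 := by
      rw [hn, hm, ← Matrix.SpecialLinearGroup.coe_mul, inv_mul_cancel,
        Matrix.SpecialLinearGroup.coe_one]
    -- conjugation equations for g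
    obtain ⟨s1, s2, s3, sa, sb, _, hmat1⟩ := (hK _).mp ((hgK u1).mp hu1K)
    obtain ⟨r1, r2, r3, ra, rb, _, hmat2⟩ := (hK _).mp ((hgK u2).mp hu2K)
    obtain ⟨q1, q2, q3, qa, qb, _, hmat3⟩ := (hK _).mp ((hgK dd).mp hddK)
    rw [Matrix.SpecialLinearGroup.coe_mul, Matrix.SpecialLinearGroup.coe_mul, hc1] at hmat1
    rw [Matrix.SpecialLinearGroup.coe_mul, Matrix.SpecialLinearGroup.coe_mul, hc2] at hmat2
    rw [Matrix.SpecialLinearGroup.coe_mul, Matrix.SpecialLinearGroup.coe_mul, hcd] at hmat3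
    -- conjugation equations for g⁻¹
    obtain ⟨p1, p2, p3, pa, pb, _, hmat4⟩ := (hK _).mp ((hgK' u1).mp hu1K)
    obtain ⟨o1, o2, o3, oa, ob, _, hmat5⟩ := (hK _).mp ((hgK' u2).mp hu2K)
    obtain ⟨w1, w2, w3, wa, wb, _, hmat6⟩ := (hK _).mp ((hgK' dd).mp hddK)
    rw [inv_inv] at hmat4 hmat5 hmat6
    rw [Matrix.SpecialLinearGroup.coe_mul, Matrix.SpecialLinearGroup.coe_mul, hc1] at hmat4
    rw [Matrix.SpecialLinearGroup.coe_mul, Matrix.SpecialLinearGroup.coe_mul, hc2] at hmat5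
    rw [Matrix.SpecialLinearGroup.coe_mul, Matrix.SpecialLinearGroup.coe_mul, hcd] at hmat6
    rw [← hn, ← hm] at hmat1 hmat2 hmat3 hmat4 hmat5 hmat6
    -- extract entries
    have E1_10 := congrFun (congrFun hmat1 1) 0
    have E1_01 := congrFun (congrFun hmat1 0) 1
    have E1_20 := congrFun (congrFun hmat1 2) 0
    have E1_21 := congrFun (congrFun hmat1 2) 1
    have E2_10 := congrFun (congrFun hmat2 1) 0
    have E2_01 := congrFun (congrFun hmat2 0) 1
    have E2_20 := congrFun (congrFun hmat2 2) 0
    have E2_21 := congrFun (congrFun hmat2 2) 1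
    have E3_10 := congrFun (congrFun hmat3 1) 0
    have E3_01 := congrFun (congrFun hmat3 0) 1
    have E4_10 := congrFun (congrFun hmat4 1) 0
    have E4_01 := congrFun (congrFun hmat4 0) 1
    have E4_20 := congrFun (congrFun hmat4 2) 0
    have E4_21 := congrFun (congrFun hmat4 2) 1
    have E5_10 := congrFun (congrFun hmat5 1) 0
    have E5_01 := congrFun (congrFun hmat5 0) 1
    have E5_20 := congrFun (congrFun hmat5 2) 0
    have E5_21 := congrFun (congrFun hmat5 2) 1
    have E6_10 := congrFun (congrFun hmat6 1) 0
    have E6_01 := congrFun (congrFun hmat6 0) 1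
    have NM10 := congrFun (congrFun hnm 1) 0
    have NM01 := congrFun (congrFun hnm 0) 1
    have NM20 := congrFun (congrFun hnm 2) 0
    have NM21 := congrFun (congrFun hnm 2) 1
    have NM00 := congrFun (congrFun hnm 0) 0
    have MN10 := congrFun (congrFun hmn 1) 0
    have MN01 := congrFun (congrFun hmn 0) 1
    have MN20 := congrFun (congrFun hmn 2) 0
    have MN21 := congrFun (congrFun hmn 2) 1
    have MN00 := congrFun (congrFun hmn 0) 0
    have MN11 := congrFun (congrFun hmn 1) 1
    simp [Matrix.mul_apply, Fin.sum_univ_three, Matrix.one_apply, Matrix.vecHead, Matrix.vecTail] at E1_10 E1_01 E1_20 E1_21 E2_10 E2_01 E2_20 E2_21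
    simp [Matrix.mul_apply, Fin.sum_univ_three, Matrix.one_apply, Matrix.vecHead, Matrix.vecTail] at E3_10 E3_01 E4_10 E4_01 E4_20 E4_21 E5_10 E5_01
    simp [Matrix.mul_apply, Fin.sum_univ_three, Matrix.one_apply, Matrix.vecHead, Matrix.vecTail] at E5_20 E5_21 E6_10 E6_01 NM10 NM01 NM20 NM21
    simp [Matrix.mul_apply, Fin.sum_univ_three, Matrix.one_apply, Matrix.vecHead, Matrix.vecTail] at NM00 MN10 MN01 MN20 MN21 MN00 MN11
    have A1 : n 1 0 * m 2 0 = 0 := by linear_combination E1_10 - NM10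
    have A2 : n 0 0 * m 2 1 = 0 := by linear_combination E1_01 - NM01
    have A3 : n 2 0 * m 2 0 = 0 := by linear_combination E1_20 - NM20
    have A4 : n 2 0 * m 2 1 = 0 := by linear_combination E1_21 - NM21
    have B1 : n 1 1 * m 2 0 = 0 := by linear_combination E2_10 - NM10
    have B2 : n 0 1 * m 2 1 = 0 := by linear_combination E2_01 - NM01
    have B3 : n 2 1 * m 2 0 = 0 := by linear_combination E2_20 - NM20
    have B4 : n 2 1 * m 2 1 = 0 := by linear_combination E2_21 - NM21
    have C1 : m 1 0 * n 2 0 = 0 := by linear_combination E4_10 - MN10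
    have C2 : m 0 0 * n 2 1 = 0 := by linear_combination E4_01 - MN01
    have C3 : m 2 0 * n 2 0 = 0 := by linear_combination E4_20 - MN20
    have C4 : m 2 0 * n 2 1 = 0 := by linear_combination E4_21 - MN21
    have C5 : m 1 1 * n 2 0 = 0 := by linear_combination E5_10 - MN10
    have C6 : m 0 1 * n 2 1 = 0 := by linear_combination E5_01 - MN01
    have C7 : m 2 1 * n 2 0 = 0 := by linear_combination E5_20 - MN20
    have C8 : m 2 1 * n 2 1 = 0 := by linear_combination E5_21 - MN21
    have hdm : m.det = 1 := (g⁻¹).2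
    have hdn : n.det = 1 := g.2
    obtain ⟨hn20, hn21⟩ := row2_zero n m hdm C1 C3 C5 C7 C2 C4 C6 C8
    obtain ⟨hm20, hm21⟩ := row2_zero m n hdn A1 A3 B1 B3 A2 A4 B2 B4
    have D2 : n 0 1 * m 1 1 = 0 := by
      linear_combination (-2/3 : ℂ) * E3_01 + (4/3 : ℂ) * NM01 - (2/3 : ℂ) * n 0 2 * hm21
    have D3 : n 1 0 * m 0 0 = 0 := by
      linear_combination (2/3 : ℂ) * E3_10 - (1/3 : ℂ) * NM10 - (1/3 : ℂ) * n 1 2 * hm20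
    have D4 : n 1 1 * m 1 0 = 0 := by
      linear_combination (-2/3 : ℂ) * E3_10 + (4/3 : ℂ) * NM10 - (2/3 : ℂ) * n 1 2 * hm20
    have F1 : m 0 0 * n 0 1 = 0 := by
      linear_combination (2/3 : ℂ) * E6_01 - (1/3 : ℂ) * MN01 - (1/3 : ℂ) * m 0 2 * hn21
    have F2 : m 0 1 * n 1 1 = 0 := by
      linear_combination (-2/3 : ℂ) * E6_01 + (4/3 : ℂ) * MN01 - (2/3 : ℂ) * m 0 2 * hn21
    have F3 : m 1 0 * n 0 0 = 0 := by
      linear_combination (2/3 : ℂ) * E6_10 - (1/3 : ℂ) * MN10 - (1/3 : ℂ) * m 1 2 * hn20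
    have hd := hdn
    rw [Matrix.det_fin_three] at hd
    by_cases h00 : n 0 0 = 0
    · -- antidiagonal case : g ∈ ρK
      have hq : n 0 1 * m 1 0 = 1 := by
        linear_combination NM00 - m 0 0 * h00 - n 0 2 * hm20
      have hm10ne : m 1 0 ≠ 0 := right_ne_zero_of_mul_eq_one hq
      have h11 : n 1 1 = 0 := by
        rcases mul_eq_zero.mp D4 with h | h
        · exact h
        · exact absurd h hm10ne
      right
      refine ⟨ρ⁻¹ * g, ?_, by simp [← mul_assoc, hρ2]⟩
      refine (hK _).mpr ⟨n 1 0, n 0 1, -(n 2 2), n 1 2, n 0 2, ?_, ?_⟩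
      · linear_combination hd + (n 1 2 * n 2 1 - n 1 1 * n 2 2) * h00 +
          (n 0 2 * n 2 0) * h11 - (n 0 1 * n 1 2) * hn20 - (n 0 2 * n 1 0) * hn21
      · rw [hρinv, Matrix.SpecialLinearGroup.coe_mul, hρ, ← hn]
        ext i j
        fin_cases i <;> fin_cases j <;>
          simp [Matrix.mul_apply, Fin.sum_univ_three, Matrix.vecHead, Matrix.vecTail, h00, h11, hn20, hn21]
    · -- diagonal case : g ∈ K
      have hm10 : m 1 0 = 0 := by
        rcases mul_eq_zero.mp F3 with h | h
        · exact h
        · exact absurd h h00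
      have hmn11 : m 1 1 * n 1 1 = 1 := by
        linear_combination MN11 - n 0 1 * hm10 - m 1 2 * hn21
      have hn11 : n 1 1 ≠ 0 := right_ne_zero_of_mul_eq_one hmn11
      have hm11 : m 1 1 ≠ 0 := left_ne_zero_of_mul_eq_one hmn11
      have hm01 : m 0 1 = 0 := by
        rcases mul_eq_zero.mp F2 with h | h
        · exact h
        · exact absurd h hn11
      have hn10 : n 1 0 = 0 := by
        have h' : m 1 1 * n 1 0 = 0 := by
          linear_combination MN10 - n 0 0 * hm10 - m 1 2 * hn20
        rcases mul_eq_zero.mp h' with h | h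
        · exact absurd h hm11
        · exact h
      have hmn00 : m 0 0 * n 0 0 = 1 := by
        linear_combination MN00 - n 1 0 * hm01 - m 0 2 * hn20
      have hm00 : m 0 0 ≠ 0 := left_ne_zero_of_mul_eq_one hmn00
      have hn01 : n 0 1 = 0 := by
        rcases mul_eq_zero.mp F1 with h | h
        · exact absurd h hm00
        · exact h
      left
      refine (hK g).mpr ⟨n 0 0, n 1 1, n 2 2, n 0 2, n 1 2, ?_, ?_⟩
      · linear_combination hd + (n 0 0 * n 1 2 - n 0 2 * n 1 0) * hn21 +
          (n 1 0 * n 2 2) * hn01 + (n 0 2 * n 1 1 - n 0 1 * n 1 2) * hn20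
      · rw [← hn]
        ext i j
        fin_cases i <;> fin_cases j <;> simp [Matrix.vecHead, Matrix.vecTail, hn01, hn10, hn20, hn21]
  · -- reverse direction
    rintro (hg | ⟨k, hk, rfl⟩)
    · exact Subgroup.le_normalizer hg
    · exact Subgroup.mul_mem _ hρnorm (Subgroup.le_normalizer hk)
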